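/- Let T = {(x,y) ∈ ℝ² : 0 < x, 0 < y, x + y < 1} and write z = 1 − x − y. Define the projective Reverse map f : T → T (almost everywhere) by: f(x,y) = ((2x−1)/x, y/x) if x > 1/2; f(x,y) = (x/y, (2y−1)/y) if y > 1/2; f(x,y) = (x/z, y/z) if z > 1/2; and f(x,y) = (1−2x, 1−2y) if x < 1/2, y < 1/2 and z < 1/2. Let μ be the measure on ℝ² obtained by restricting Lebesgue measure to T and taking the density (x,y) ↦ 1/((1−x)(1−y)(x+y)). Then the pushforward of μ under f equals μ; i.e. the density of the invariant measure of the projective Reverse algorithm on the unit simplex is 1/((1−x)(1−y)(1−z)). -/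

import Mathlib

open MeasureTheory Set

/-- The open unit simplex `T = {(x,y) : 0 < x, 0 < y, x + y < 1}` in the plane. -/
def simplexT : Set (ℝ × ℝ) := {p | 0 < p.1 ∧ 0 < p.2 ∧ p.1 + p.2 < 1}

/-- The projective Reverse map in the coordinates `(x,y)`, with `z = 1 - x - y`. -/
noncomputable def revProj : ℝ × ℝ → ℝ × ℝ := fun p =>
  if 1 / 2 < p.1 then ((2 * p.1 - 1) / p.1, p.2 / p.1)
  else if 1 / 2 < p.2 then (p.1 / p.2, (2 * p.2 - 1) / p.2)
  else if 1 / 2 < 1 - p.1 - p.2 then (p.1 / (1 - p.1 - p.2), p.2 / (1 - p.1 - p.2))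
  else (1 - 2 * p.1, 1 - 2 * p.2)

/-- Lebesgue measure restricted to `T` with density `1/((1-x)(1-y)(x+y))`,
i.e. `1/((1-x)(1-y)(1-z))` with `z = 1-x-y`. -/
noncomputable def revMeasure : Measure (ℝ × ℝ) :=
  (volume.restrict simplexT).withDensity fun p =>
    ENNReal.ofReal (1 / ((1 - p.1) * (1 - p.2) * (p.1 + p.2)))

/-! ### Auxiliary definitions -/

/-- The density, as a function into `ℝ≥0∞`. -/
noncomputable def dens : ℝ × ℝ → ENNReal := fun p =>
  ENNReal.ofReal (1 / ((1 - p.1) * (1 - p.2) * (p.1 + p.2)))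

/-- The continuous linear map `(u,v) ↦ (a u + b v, c u + d v)`. -/
noncomputable def clm2 (a b c d : ℝ) : (ℝ × ℝ) →L[ℝ] (ℝ × ℝ) :=
  (a • ContinuousLinearMap.fst ℝ ℝ ℝ + b • ContinuousLinearMap.snd ℝ ℝ ℝ).prod
  (c • ContinuousLinearMap.fst ℝ ℝ ℝ + d • ContinuousLinearMap.snd ℝ ℝ ℝ)

lemma clm2_det (a b c d : ℝ) : (clm2 a b c d).det = a * d - b * c := by
  have h : (clm2 a b c d).det = LinearMap.det ((clm2 a b c d) : (ℝ×ℝ) →ₗ[ℝ] (ℝ×ℝ)) := rfl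
  rw [h, ← LinearMap.det_toMatrix (Module.Basis.finTwoProd ℝ), Matrix.det_fin_two]
  simp [LinearMap.toMatrix_apply, clm2, smul_eq_mul]

/-- Inverses of the four branches of `revProj`. -/
noncomputable def hA : ℝ × ℝ → ℝ × ℝ := fun w => ((2 - w.1)⁻¹, w.2 * (2 - w.1)⁻¹)
noncomputable def hB : ℝ × ℝ → ℝ × ℝ := fun w => (w.1 * (2 - w.2)⁻¹, (2 - w.2)⁻¹)
noncomputable def hC : ℝ × ℝ → ℝ × ℝ :=
  fun w => (w.1 * (1 + w.1 + w.2)⁻¹, w.2 * (1 + w.1 + w.2)⁻¹)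
noncomputable def hD : ℝ × ℝ → ℝ × ℝ := fun w => ((1 - w.1) / 2, (1 - w.2) / 2)

/-- Derivatives of the four inverse branches. -/
noncomputable def DA (w : ℝ × ℝ) : (ℝ × ℝ) →L[ℝ] (ℝ × ℝ) :=
  clm2 (((2 - w.1)⁻¹)^2) 0 (w.2 * ((2 - w.1)⁻¹)^2) ((2 - w.1)⁻¹)
noncomputable def DB (w : ℝ × ℝ) : (ℝ × ℝ) →L[ℝ] (ℝ × ℝ) :=
  clm2 ((2 - w.2)⁻¹) (w.1 * ((2 - w.2)⁻¹)^2) 0 (((2 - w.2)⁻¹)^2)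
noncomputable def DC (w : ℝ × ℝ) : (ℝ × ℝ) →L[ℝ] (ℝ × ℝ) :=
  clm2 ((1 + w.1 + w.2)⁻¹ - w.1 * ((1 + w.1 + w.2)⁻¹)^2) (-(w.1 * ((1 + w.1 + w.2)⁻¹)^2))
    (-(w.2 * ((1 + w.1 + w.2)⁻¹)^2)) ((1 + w.1 + w.2)⁻¹ - w.2 * ((1 + w.1 + w.2)⁻¹)^2)
noncomputable def DD (_w : ℝ × ℝ) : (ℝ × ℝ) →L[ℝ] (ℝ × ℝ) :=
  clm2 (-(1/2)) 0 0 (-(1/2))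

lemma hasFDerivAt_hA (w : ℝ × ℝ) (h : 2 - w.1 ≠ 0) : HasFDerivAt hA (DA w) w := by
  have h0 : HasFDerivAt (fun w : ℝ × ℝ => 2 - w.1)
      (-(ContinuousLinearMap.fst ℝ ℝ ℝ)) w := (hasFDerivAt_fst).const_sub 2
  have h1 := (hasDerivAt_inv h).comp_hasFDerivAt w h0
  have h2 := (hasFDerivAt_snd (𝕜 := ℝ) (p := w)).mul h1
  refine ((HasFDerivAt.prodMk h1 h2).congr_fderiv ?_)
  ext v <;> simp [DA, clm2] <;> field_simp <;> ring

lemma hasFDerivAt_hB (w : ℝ × ℝ) (h : 2 - w.2 ≠ 0) : HasFDerivAt hB (DB w) w := by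
  have h0 : HasFDerivAt (fun w : ℝ × ℝ => 2 - w.2)
      (-(ContinuousLinearMap.snd ℝ ℝ ℝ)) w := (hasFDerivAt_snd).const_sub 2
  have h1 := (hasDerivAt_inv h).comp_hasFDerivAt w h0
  have h2 := (hasFDerivAt_fst (𝕜 := ℝ) (p := w)).mul h1
  refine ((HasFDerivAt.prodMk h2 h1).congr_fderiv ?_)
  ext v <;> simp [DB, clm2] <;> field_simp <;> ring

lemma hasFDerivAt_hC (w : ℝ × ℝ) (h : 1 + w.1 + w.2 ≠ 0) : HasFDerivAt hC (DC w) w := by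
  have h0 : HasFDerivAt (fun w : ℝ × ℝ => 1 + w.1 + w.2)
      (ContinuousLinearMap.fst ℝ ℝ ℝ + ContinuousLinearMap.snd ℝ ℝ ℝ) w := by
    have := ((hasFDerivAt_fst (𝕜 := ℝ) (p := w)).const_add 1).add
      (hasFDerivAt_snd (𝕜 := ℝ) (p := w))
    exact this.congr_fderiv rfl
  have h1 := (hasDerivAt_inv h).comp_hasFDerivAt w h0
  have h2 := (hasFDerivAt_fst (𝕜 := ℝ) (p := w)).mul h1
  have h3 := (hasFDerivAt_snd (𝕜 := ℝ) (p := w)).mul h1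
  refine ((HasFDerivAt.prodMk h2 h3).congr_fderiv ?_)
  ext v <;> simp [DC, clm2] <;> field_simp <;> ring

lemma hasFDerivAt_hD (w : ℝ × ℝ) : HasFDerivAt hD (DD w) w := by
  have heq : hD = fun w : ℝ × ℝ => ((1:ℝ)/2, (1:ℝ)/2) + (-(2:ℝ)⁻¹) • w := by
    funext w
    simp only [hD, Prod.smul_mk, Prod.mk_add_mk, Prod.ext_iff, Prod.smul_fst, Prod.smul_snd,
      Prod.fst_add, Prod.snd_add, smul_eq_mul]
    constructor <;> ring
  rw [heq]
  have h1 := (((hasFDerivAt_id (𝕜 := ℝ) w).const_smul (-(2:ℝ)⁻¹)).const_add ((1:ℝ)/2, (1:ℝ)/2))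
  refine h1.congr_fderiv ?_
  ext v <;> simp [DD, clm2] <;> ring

lemma measurable_revProj : Measurable revProj := by
  unfold revProj
  apply Measurable.ite (measurableSet_lt measurable_const measurable_fst)
  · fun_prop
  apply Measurable.ite (measurableSet_lt measurable_const measurable_snd)
  · fun_prop
  apply Measurable.ite
  · exact measurableSet_lt measurable_const (by fun_prop)
  · fun_prop
  · fun_prop

lemma measurableSet_simplexT : MeasurableSet simplexT := by
  have : simplexT = {p : ℝ × ℝ | 0 < p.1} ∩ ({p | 0 < p.2} ∩ {p | p.1 + p.2 < 1}) := by
    ext p; simp [simplexT]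
  rw [this]
  exact (measurableSet_lt measurable_const measurable_fst).inter
    ((measurableSet_lt measurable_const measurable_snd).inter
      (measurableSet_lt (by fun_prop) measurable_const))

lemma vol_line1 (c : ℝ) : volume {p : ℝ × ℝ | p.1 = c} = 0 := by
  have h : {p : ℝ × ℝ | p.1 = c} = ({c} : Set ℝ) ×ˢ (univ : Set ℝ) := by
    ext p; constructor
    · intro h; exact ⟨h, trivial⟩
    · intro h; exact h.1
  rw [h, Measure.volume_eq_prod, Measure.prod_prod]
  simp

lemma vol_line2 (c : ℝ) : volume {p : ℝ × ℝ | p.2 = c} = 0 := by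
  have h : {p : ℝ × ℝ | p.2 = c} = (univ : Set ℝ) ×ˢ ({c} : Set ℝ) := by
    ext p; constructor
    · intro h; exact ⟨trivial, h⟩
    · intro h; exact h.2
  rw [h, Measure.volume_eq_prod, Measure.prod_prod]
  simp

lemma vol_line3 (c : ℝ) : volume {p : ℝ × ℝ | p.1 + p.2 = c} = 0 := by
  have hm : MeasurableSet {p : ℝ × ℝ | p.1 + p.2 = c} :=
    measurableSet_eq_fun (by fun_prop) measurable_const
  rw [Measure.volume_eq_prod, Measure.prod_apply hm]
  have h : ∀ x : ℝ, (volume (Prod.mk x ⁻¹' {p : ℝ × ℝ | p.1 + p.2 = c})) = 0 := by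
    intro x
    have h2 : Prod.mk x ⁻¹' {p : ℝ × ℝ | p.1 + p.2 = c} = {c - x} := by
      ext y; simp; constructor <;> intro h <;> linarith
    rw [h2]; simp
  rw [lintegral_congr h]; simp

/-! ### Regions -/

def RA : Set (ℝ × ℝ) := simplexT ∩ {p | 1/2 < p.1}
def RB : Set (ℝ × ℝ) := simplexT ∩ {p | 1/2 < p.2}
def RC : Set (ℝ × ℝ) := simplexT ∩ {p | p.1 + p.2 < 1/2}
def RD : Set (ℝ × ℝ) := simplexT ∩ {p | p.1 < 1/2 ∧ p.2 < 1/2 ∧ 1/2 < p.1 + p.2}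
def RD' : Set (ℝ × ℝ) := simplexT ∩ {p | ¬ 1/2 < p.1 ∧ ¬ 1/2 < p.2 ∧ ¬ 1/2 < 1 - p.1 - p.2}

/-! ### Forward lemmas : `hᵢ` maps `T` into region `i` and is a right inverse of `revProj` -/

lemma fwdA : ∀ w ∈ simplexT, hA w ∈ RA ∧ revProj (hA w) = w := by
  rintro w ⟨hu, hv, huv⟩
  have hu1 : w.1 < 1 := by linarith
  have h2u : (0:ℝ) < 2 - w.1 := by linarith
  have a1 : 0 < (2 - w.1)⁻¹ := inv_pos.mpr h2u
  have a4 : 1/2 < (2 - w.1)⁻¹ := by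
    rw [inv_eq_one_div, div_lt_div_iff₀ (by norm_num) h2u]; linarith
  have a3 : (2 - w.1)⁻¹ + w.2 * (2 - w.1)⁻¹ < 1 := by
    have e : (2 - w.1)⁻¹ + w.2 * (2 - w.1)⁻¹ = (1 + w.2)/(2 - w.1) := by field_simp
    rw [e, div_lt_one h2u]; linarith
  refine ⟨⟨⟨a1, mul_pos hv a1, a3⟩, a4⟩, ?_⟩
  rw [revProj, hA]
  rw [if_pos a4, Prod.ext_iff]
  dsimp only
  constructor <;> field_simp <;> ring

lemma fwdB : ∀ w ∈ simplexT, hB w ∈ RB ∧ revProj (hB w) = w := by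
  rintro w ⟨hu, hv, huv⟩
  have hv1 : w.2 < 1 := by linarith
  have h2v : (0:ℝ) < 2 - w.2 := by linarith
  have a1 : 0 < (2 - w.2)⁻¹ := inv_pos.mpr h2v
  have a4 : 1/2 < (2 - w.2)⁻¹ := by
    rw [inv_eq_one_div, div_lt_div_iff₀ (by norm_num) h2v]; linarith
  have a3 : w.1 * (2 - w.2)⁻¹ + (2 - w.2)⁻¹ < 1 := by
    have e : w.1 * (2 - w.2)⁻¹ + (2 - w.2)⁻¹ = (w.1 + 1)/(2 - w.2) := by field_simp
    rw [e, div_lt_one h2v]; linarith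
  have anot : ¬ (1/2 < w.1 * (2 - w.2)⁻¹) := by
    rw [not_lt, ← div_eq_mul_inv, div_le_iff₀ h2v]; nlinarith
  refine ⟨⟨⟨mul_pos hu a1, a1, a3⟩, a4⟩, ?_⟩
  rw [revProj, hB]
  rw [if_neg anot, if_pos a4, Prod.ext_iff]
  dsimp only
  constructor <;> field_simp <;> ring

lemma fwdC : ∀ w ∈ simplexT, hC w ∈ RC ∧ revProj (hC w) = w := by
  rintro w ⟨hu, hv, huv⟩
  have hs : (0:ℝ) < 1 + w.1 + w.2 := by linarith
  have a0 : 0 < (1 + w.1 + w.2)⁻¹ := inv_pos.mpr hs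
  have a1 : 0 < w.1 * (1 + w.1 + w.2)⁻¹ := mul_pos hu a0
  have a2 : 0 < w.2 * (1 + w.1 + w.2)⁻¹ := mul_pos hv a0
  have asum : w.1 * (1 + w.1 + w.2)⁻¹ + w.2 * (1 + w.1 + w.2)⁻¹ < 1/2 := by
    have e : w.1 * (1 + w.1 + w.2)⁻¹ + w.2 * (1 + w.1 + w.2)⁻¹
        = (w.1 + w.2)/(1 + w.1 + w.2) := by field_simp
    rw [e, div_lt_div_iff₀ hs (by norm_num)]; linarith
  have nA : ¬ (1/2 < w.1 * (1 + w.1 + w.2)⁻¹) := by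
    rw [not_lt]; nlinarith
  have nB : ¬ (1/2 < w.2 * (1 + w.1 + w.2)⁻¹) := by
    rw [not_lt]; nlinarith
  have cC : 1/2 < 1 - w.1 * (1 + w.1 + w.2)⁻¹ - w.2 * (1 + w.1 + w.2)⁻¹ := by
    nlinarith
  have hd : 1 - w.1 * (1 + w.1 + w.2)⁻¹ - w.2 * (1 + w.1 + w.2)⁻¹ = (1 + w.1 + w.2)⁻¹ := by
    field_simp
    ring
  constructor
  · refine ⟨⟨a1, a2, ?_⟩, ?_⟩
    · show w.1 * (1 + w.1 + w.2)⁻¹ + w.2 * (1 + w.1 + w.2)⁻¹ < 1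
      linarith
    · exact asum
  rw [revProj, hC]
  rw [if_neg nA, if_neg nB, if_pos cC, hd, Prod.ext_iff]
  dsimp only
  constructor <;> field_simp

lemma fwdD : ∀ w ∈ simplexT, hD w ∈ RD ∧ revProj (hD w) = w := by
  rintro w ⟨hu, hv, huv⟩
  have nA : ¬ ((1:ℝ)/2 < (1 - w.1)/2) := by rw [not_lt]; linarith
  have nB : ¬ ((1:ℝ)/2 < (1 - w.2)/2) := by rw [not_lt]; linarith
  have nC : ¬ ((1:ℝ)/2 < 1 - (1 - w.1)/2 - (1 - w.2)/2) := by rw [not_lt]; linarith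
  constructor
  · refine ⟨⟨by show (0:ℝ) < (1 - w.1)/2; linarith, by show (0:ℝ) < (1 - w.2)/2; linarith,
      by show (1 - w.1)/2 + (1 - w.2)/2 < 1; linarith⟩,
      by show (1 - w.1)/2 < 1/2; linarith, by show (1 - w.2)/2 < 1/2; linarith, ?_⟩
    show (1:ℝ)/2 < (1 - w.1)/2 + (1 - w.2)/2
    linarith
  rw [revProj, hD]
  rw [if_neg nA, if_neg nB, if_neg nC, Prod.ext_iff]
  dsimp only
  constructor <;> ring

/-! ### Backward lemmas -/

lemma bwdA : ∀ p ∈ RA, revProj p ∈ simplexT ∧ hA (revProj p) = p := by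
  rintro p ⟨⟨hx, hy, hxy⟩, hx2⟩
  have hx2 : (1:ℝ)/2 < p.1 := hx2
  have hx0 : p.1 ≠ 0 := ne_of_gt hx
  have hval : revProj p = ((2 * p.1 - 1) / p.1, p.2 / p.1) := by
    simp only [revProj]; rw [if_pos hx2]
  rw [hval]
  refine ⟨⟨div_pos (by linarith) hx, div_pos hy hx, ?_⟩, ?_⟩
  · show (2 * p.1 - 1) / p.1 + p.2 / p.1 < 1
    rw [← add_div, div_lt_one hx]; linarith
  · have key : 2 - (2 * p.1 - 1) / p.1 = 1 / p.1 := by field_simp; ring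
    simp only [hA]
    rw [key, Prod.ext_iff]
    dsimp only
    constructor
    · simp [hx0]
    · rw [one_div, inv_inv]
      field_simp

lemma bwdB : ∀ p ∈ RB, revProj p ∈ simplexT ∧ hB (revProj p) = p := by
  rintro p ⟨⟨hx, hy, hxy⟩, hy2⟩
  have hy2 : (1:ℝ)/2 < p.2 := hy2
  have hy0 : p.2 ≠ 0 := ne_of_gt hy
  have nA : ¬ ((1:ℝ)/2 < p.1) := by rw [not_lt]; linarith
  have hval : revProj p = (p.1 / p.2, (2 * p.2 - 1) / p.2) := by
    simp only [revProj]; rw [if_neg nA, if_pos hy2]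
  rw [hval]
  refine ⟨⟨div_pos hx hy, div_pos (by linarith) hy, ?_⟩, ?_⟩
  · show p.1 / p.2 + (2 * p.2 - 1) / p.2 < 1
    rw [← add_div, div_lt_one hy]; linarith
  · have key : 2 - (2 * p.2 - 1) / p.2 = 1 / p.2 := by field_simp; ring
    simp only [hB]
    rw [key, Prod.ext_iff]
    dsimp only
    constructor
    · rw [one_div, inv_inv]
      field_simp
    · simp [hy0]

lemma bwdC : ∀ p ∈ RC, revProj p ∈ simplexT ∧ hC (revProj p) = p := by
  rintro p ⟨⟨hx, hy, hxy⟩, hsum⟩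
  have hsum : p.1 + p.2 < 1/2 := hsum
  have hz : (0:ℝ) < 1 - p.1 - p.2 := by linarith
  have hz0 : 1 - p.1 - p.2 ≠ 0 := ne_of_gt hz
  have nA : ¬ ((1:ℝ)/2 < p.1) := by rw [not_lt]; linarith
  have nB : ¬ ((1:ℝ)/2 < p.2) := by rw [not_lt]; linarith
  have cC : (1:ℝ)/2 < 1 - p.1 - p.2 := by linarith
  have hval : revProj p = (p.1 / (1 - p.1 - p.2), p.2 / (1 - p.1 - p.2)) := by
    simp only [revProj]; rw [if_neg nA, if_neg nB, if_pos cC]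
  rw [hval]
  refine ⟨⟨div_pos hx hz, div_pos hy hz, ?_⟩, ?_⟩
  · show p.1 / (1 - p.1 - p.2) + p.2 / (1 - p.1 - p.2) < 1
    rw [← add_div, div_lt_one hz]; linarith
  · have key : 1 + p.1 / (1 - p.1 - p.2) + p.2 / (1 - p.1 - p.2) = (1 - p.1 - p.2)⁻¹ := by
      field_simp
      ring
    simp only [hC]
    rw [key, inv_inv, Prod.ext_iff]
    dsimp only
    constructor <;> field_simp

lemma bwdD : ∀ p ∈ RD, revProj p ∈ simplexT ∧ hD (revProj p) = p := by
  rintro p ⟨⟨hx, hy, hxy⟩, hx2, hy2, hsum⟩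
  have hx2 : p.1 < 1/2 := hx2
  have hy2 : p.2 < 1/2 := hy2
  have hsum : 1/2 < p.1 + p.2 := hsum
  have nA : ¬ ((1:ℝ)/2 < p.1) := by rw [not_lt]; linarith
  have nB : ¬ ((1:ℝ)/2 < p.2) := by rw [not_lt]; linarith
  have nC : ¬ ((1:ℝ)/2 < 1 - p.1 - p.2) := by rw [not_lt]; linarith
  have hval : revProj p = (1 - 2 * p.1, 1 - 2 * p.2) := by
    simp only [revProj]; rw [if_neg nA, if_neg nB, if_neg nC]
  rw [hval]
  refine ⟨⟨by show (0:ℝ) < 1 - 2 * p.1; linarith, by show (0:ℝ) < 1 - 2 * p.2; linarith,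
    by show 1 - 2 * p.1 + (1 - 2 * p.2) < 1; linarith⟩, ?_⟩
  simp only [hD]
  rw [Prod.ext_iff]
  dsimp only
  constructor <;> ring

/-! ### Image and change-of-variables lemmas -/

lemma image_eq (h : ℝ × ℝ → ℝ × ℝ) (R : Set (ℝ × ℝ))
    (fwd : ∀ w ∈ simplexT, h w ∈ R ∧ revProj (h w) = w)
    (bwd : ∀ p ∈ R, revProj p ∈ simplexT ∧ h (revProj p) = p)
    (E : Set (ℝ × ℝ)) : h '' (E ∩ simplexT) = R ∩ revProj ⁻¹' E := by
  ext p; constructor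
  · rintro ⟨w, ⟨hwE, hwT⟩, rfl⟩
    exact ⟨(fwd w hwT).1, by rw [mem_preimage, (fwd w hwT).2]; exact hwE⟩
  · rintro ⟨hpR, hpE⟩
    exact ⟨revProj p, ⟨hpE, (bwd p hpR).1⟩, (bwd p hpR).2⟩

lemma cov (h : ℝ × ℝ → ℝ × ℝ) (D : ℝ × ℝ → (ℝ × ℝ) →L[ℝ] (ℝ × ℝ)) (R : Set (ℝ × ℝ))
    (fwd : ∀ w ∈ simplexT, h w ∈ R ∧ revProj (h w) = w)
    (bwd : ∀ p ∈ R, revProj p ∈ simplexT ∧ h (revProj p) = p)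
    (hderiv : ∀ w ∈ simplexT, HasFDerivAt h (D w) w)
    (E : Set (ℝ × ℝ)) (hE : MeasurableSet E) :
    ∫⁻ p in R ∩ revProj ⁻¹' E, dens p ∂volume
      = ∫⁻ w in E ∩ simplexT, ENNReal.ofReal |(D w).det| * dens (h w) ∂volume := by
  rw [← image_eq h R fwd bwd E]
  refine lintegral_image_eq_lintegral_abs_det_fderiv_mul volume
    (hE.inter measurableSet_simplexT)
    (fun w hw => (hderiv w hw.2).hasFDerivWithinAt) ?_ dens
  intro a ha b hb hab
  rw [← (fwd a ha.2).2, ← (fwd b hb.2).2, hab]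

/-! ### The pointwise density identity -/

lemma sum_identity (w : ℝ × ℝ) (hw : w ∈ simplexT) :
    ENNReal.ofReal |(DA w).det| * dens (hA w) + ENNReal.ofReal |(DB w).det| * dens (hB w)
      + ENNReal.ofReal |(DC w).det| * dens (hC w) + ENNReal.ofReal |(DD w).det| * dens (hD w)
      = dens w := by
  obtain ⟨hu, hv, huv⟩ := hw
  have hu1 : w.1 < 1 := by linarith
  have hv1 : w.2 < 1 := by linarith
  have h2u : (0:ℝ) < 2 - w.1 := by linarith
  have h2v : (0:ℝ) < 2 - w.2 := by linarith
  have hs : (0:ℝ) < 1 + w.1 + w.2 := by linarith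
  have htA : (0:ℝ) < (2 - w.1)⁻¹ := inv_pos.mpr h2u
  have htB : (0:ℝ) < (2 - w.2)⁻¹ := inv_pos.mpr h2v
  have htC : (0:ℝ) < (1 + w.1 + w.2)⁻¹ := inv_pos.mpr hs
  -- determinants
  have detA : |(DA w).det| = ((2 - w.1)⁻¹)^3 := by
    have : (DA w).det = ((2 - w.1)⁻¹)^3 := by simp only [DA, clm2_det]; ring
    rw [this]; exact abs_of_pos (pow_pos htA 3)
  have detB : |(DB w).det| = ((2 - w.2)⁻¹)^3 := by
    have : (DB w).det = ((2 - w.2)⁻¹)^3 := by simp only [DB, clm2_det]; ring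
    rw [this]; exact abs_of_pos (pow_pos htB 3)
  have detC : |(DC w).det| = ((1 + w.1 + w.2)⁻¹)^3 := by
    have : (DC w).det = ((1 + w.1 + w.2)⁻¹)^3 := by
      simp only [DC, clm2_det]
      field_simp
      ring
    rw [this]; exact abs_of_pos (pow_pos htC 3)
  have detD : |(DD w).det| = 1/4 := by
    have : (DD w).det = 1/4 := by simp only [DD, clm2_det]; norm_num
    rw [this]; norm_num
  -- positivity of the target denominators
  have pA : (0:ℝ) < (1 - w.1) * (2 - w.1 - w.2) * (1 + w.2) :=
    mul_pos (mul_pos (by linarith) (by linarith)) (by linarith)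
  have pB : (0:ℝ) < (1 - w.2) * (2 - w.1 - w.2) * (1 + w.1) :=
    mul_pos (mul_pos (by linarith) (by linarith)) (by linarith)
  have pC : (0:ℝ) < (1 + w.1) * (1 + w.2) * (w.1 + w.2) :=
    mul_pos (mul_pos (by linarith) (by linarith)) (by linarith)
  have pD : (0:ℝ) < (1 + w.1) * (1 + w.2) * (2 - w.1 - w.2) :=
    mul_pos (mul_pos (by linarith) (by linarith)) (by linarith)
  -- terms
  have termA : ENNReal.ofReal |(DA w).det| * dens (hA w)
      = ENNReal.ofReal (1 / ((1 - w.1) * (2 - w.1 - w.2) * (1 + w.2))) := by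
    rw [detA]
    simp only [dens, hA]
    rw [← ENNReal.ofReal_mul (le_of_lt (pow_pos htA 3))]
    congr 1
    have eA : (1 - ((2 - w.1)⁻¹, w.2 * (2 - w.1)⁻¹).1) * (1 - ((2 - w.1)⁻¹, w.2 * (2 - w.1)⁻¹).2)
        * (((2 - w.1)⁻¹, w.2 * (2 - w.1)⁻¹).1 + ((2 - w.1)⁻¹, w.2 * (2 - w.1)⁻¹).2)
        = ((1 - w.1) * (2 - w.1 - w.2) * (1 + w.2)) / (2 - w.1)^3 := by
      field_simp
      ring
    have hcancel : ((2 - w.1)⁻¹)^3 * (2 - w.1)^3 = 1 := by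
      rw [← mul_pow, inv_mul_cancel₀ h2u.ne']; norm_num
    rw [eA, one_div_div, ← mul_div_assoc, hcancel]
  have termB : ENNReal.ofReal |(DB w).det| * dens (hB w)
      = ENNReal.ofReal (1 / ((1 - w.2) * (2 - w.1 - w.2) * (1 + w.1))) := by
    rw [detB]
    simp only [dens, hB]
    rw [← ENNReal.ofReal_mul (le_of_lt (pow_pos htB 3))]
    congr 1
    have eB : (1 - (w.1 * (2 - w.2)⁻¹, (2 - w.2)⁻¹).1) * (1 - (w.1 * (2 - w.2)⁻¹, (2 - w.2)⁻¹).2)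
        * ((w.1 * (2 - w.2)⁻¹, (2 - w.2)⁻¹).1 + (w.1 * (2 - w.2)⁻¹, (2 - w.2)⁻¹).2)
        = ((1 - w.2) * (2 - w.1 - w.2) * (1 + w.1)) / (2 - w.2)^3 := by
      field_simp
      ring
    have hcancel : ((2 - w.2)⁻¹)^3 * (2 - w.2)^3 = 1 := by
      rw [← mul_pow, inv_mul_cancel₀ h2v.ne']; norm_num
    rw [eB, one_div_div, ← mul_div_assoc, hcancel]
  have termC : ENNReal.ofReal |(DC w).det| * dens (hC w)
      = ENNReal.ofReal (1 / ((1 + w.1) * (1 + w.2) * (w.1 + w.2))) := by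
    rw [detC]
    simp only [dens, hC]
    rw [← ENNReal.ofReal_mul (le_of_lt (pow_pos htC 3))]
    congr 1
    have eC : (1 - (w.1 * (1 + w.1 + w.2)⁻¹, w.2 * (1 + w.1 + w.2)⁻¹).1)
        * (1 - (w.1 * (1 + w.1 + w.2)⁻¹, w.2 * (1 + w.1 + w.2)⁻¹).2)
        * ((w.1 * (1 + w.1 + w.2)⁻¹, w.2 * (1 + w.1 + w.2)⁻¹).1
            + (w.1 * (1 + w.1 + w.2)⁻¹, w.2 * (1 + w.1 + w.2)⁻¹).2)
        = ((1 + w.2) * (1 + w.1) * (w.1 + w.2)) / (1 + w.1 + w.2)^3 := by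
      field_simp
      ring
    have hcancel : ((1 + w.1 + w.2)⁻¹)^3 * (1 + w.1 + w.2)^3 = 1 := by
      rw [← mul_pow, inv_mul_cancel₀ hs.ne']; norm_num
    rw [eC, one_div_div, ← mul_div_assoc, hcancel]
    rw [show (1 + w.2) * (1 + w.1) * (w.1 + w.2) = (1 + w.1) * (1 + w.2) * (w.1 + w.2) by ring]
  have termD : ENNReal.ofReal |(DD w).det| * dens (hD w)
      = ENNReal.ofReal (2 / ((1 + w.1) * (1 + w.2) * (2 - w.1 - w.2))) := by
    rw [detD]
    simp only [dens, hD]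
    rw [← ENNReal.ofReal_mul (by norm_num : (0:ℝ) ≤ 1/4)]
    congr 1
    have eD : (1 - ((1 - w.1) / 2, (1 - w.2) / 2).1) * (1 - ((1 - w.1) / 2, (1 - w.2) / 2).2)
        * (((1 - w.1) / 2, (1 - w.2) / 2).1 + ((1 - w.1) / 2, (1 - w.2) / 2).2)
        = ((1 + w.1) * (1 + w.2) * (2 - w.1 - w.2)) / 8 := by
      dsimp only
      ring
    rw [eD, one_div_div, ← mul_div_assoc]
    norm_num
  rw [termA, termB, termC, termD]
  rw [← ENNReal.ofReal_add (le_of_lt (div_pos one_pos pA)) (le_of_lt (div_pos one_pos pB)),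
    ← ENNReal.ofReal_add (by positivity) (le_of_lt (div_pos one_pos pC)),
    ← ENNReal.ofReal_add (by positivity) (le_of_lt (div_pos two_pos pD))]
  simp only [dens]
  congr 1
  have d1 : (1:ℝ) - w.1 ≠ 0 := by linarith
  have d2 : (1:ℝ) - w.2 ≠ 0 := by linarith
  have d3 : w.1 + w.2 ≠ 0 := by linarith
  have d4 : (2:ℝ) - w.1 - w.2 ≠ 0 := by linarith
  have d5 : (1:ℝ) + w.1 ≠ 0 := by linarith
  have d6 : (1:ℝ) + w.2 ≠ 0 := by linarith
  field_simp
  ring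

/-! ### Measurability of the integrands -/

lemma measurable_termA :
    Measurable (fun w : ℝ × ℝ => ENNReal.ofReal |(DA w).det| * dens (hA w)) := by
  simp only [DA, clm2_det, dens, hA]
  apply Measurable.fun_mul <;> apply ENNReal.measurable_ofReal.comp <;> fun_prop

lemma measurable_termB :
    Measurable (fun w : ℝ × ℝ => ENNReal.ofReal |(DB w).det| * dens (hB w)) := by
  simp only [DB, clm2_det, dens, hB]
  apply Measurable.fun_mul <;> apply ENNReal.measurable_ofReal.comp <;> fun_prop

lemma measurable_termC :
    Measurable (fun w : ℝ × ℝ => ENNReal.ofReal |(DC w).det| * dens (hC w)) := by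
  simp only [DC, clm2_det, dens, hC]
  apply Measurable.fun_mul <;> apply ENNReal.measurable_ofReal.comp <;> fun_prop

/-! ### Measurability of the regions -/

lemma measurableSet_RA : MeasurableSet RA :=
  measurableSet_simplexT.inter (measurableSet_lt measurable_const measurable_fst)

lemma measurableSet_RB : MeasurableSet RB :=
  measurableSet_simplexT.inter (measurableSet_lt measurable_const measurable_snd)

lemma measurableSet_RC : MeasurableSet RC :=
  measurableSet_simplexT.inter (measurableSet_lt (by fun_prop) measurable_const)

lemma measurableSet_RD : MeasurableSet RD := by
  have h : RD = simplexT ∩ ({p : ℝ × ℝ | p.1 < 1/2} ∩ ({p : ℝ × ℝ | p.2 < 1/2}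
      ∩ {p : ℝ × ℝ | 1/2 < p.1 + p.2})) := by
    ext p; simp only [RD, mem_inter_iff, mem_setOf_eq]
  rw [h]
  exact measurableSet_simplexT.inter
    ((measurableSet_lt measurable_fst measurable_const).inter
      ((measurableSet_lt measurable_snd measurable_const).inter
        (measurableSet_lt measurable_const (by fun_prop))))

lemma measurableSet_RD' : MeasurableSet RD' := by
  have h : RD' = simplexT ∩ (({p : ℝ × ℝ | 1/2 < p.1}ᶜ) ∩ (({p : ℝ × ℝ | 1/2 < p.2}ᶜ)
      ∩ ({p : ℝ × ℝ | 1/2 < 1 - p.1 - p.2}ᶜ))) := by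
    ext p
    simp only [RD', mem_inter_iff, mem_setOf_eq, mem_compl_iff]
  rw [h]
  exact measurableSet_simplexT.inter
    (((measurableSet_lt measurable_const measurable_fst).compl).inter
      (((measurableSet_lt measurable_const measurable_snd).compl).inter
        ((measurableSet_lt measurable_const (by fun_prop)).compl)))

/-! ### The main theorem -/

/-- The measure with density `1/((1-x)(1-y)(1-z))` on the unit simplex is invariant
under the projective Reverse algorithm. -/
theorem stmt_7 : revMeasure.map revProj = revMeasure := by
  have hrM : ∀ S : Set (ℝ × ℝ), MeasurableSet S →
      revMeasure S = ∫⁻ p in S ∩ simplexT, dens p ∂volume := by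
    intro S hS
    have h0 : revMeasure = (volume.restrict simplexT).withDensity dens := rfl
    rw [h0, withDensity_apply _ hS, Measure.restrict_restrict hS]
  ext E hE
  have hP : MeasurableSet (revProj ⁻¹' E) := measurable_revProj hE
  rw [Measure.map_apply measurable_revProj hE, hrM _ hP, hrM E hE]
  -- decompose the domain into the four regions
  have hsplit : revProj ⁻¹' E ∩ simplexT
      = (RA ∩ revProj ⁻¹' E) ∪ ((RB ∩ revProj ⁻¹' E)
        ∪ ((RC ∩ revProj ⁻¹' E) ∪ (RD' ∩ revProj ⁻¹' E))) := by
    ext p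
    simp only [RA, RB, RC, RD', mem_inter_iff, mem_union, mem_preimage, mem_setOf_eq]
    constructor
    · rintro ⟨hpE, hpT⟩
      by_cases h1 : 1/2 < p.1
      · exact Or.inl ⟨⟨hpT, h1⟩, hpE⟩
      by_cases h2 : 1/2 < p.2
      · exact Or.inr (Or.inl ⟨⟨hpT, h2⟩, hpE⟩)
      by_cases h3 : 1/2 < 1 - p.1 - p.2
      · refine Or.inr (Or.inr (Or.inl ⟨⟨hpT, ?_⟩, hpE⟩))
        linarith
      · exact Or.inr (Or.inr (Or.inr ⟨⟨hpT, h1, h2, h3⟩, hpE⟩))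
    · rintro (⟨⟨hT, _⟩, hpE⟩ | ⟨⟨hT, _⟩, hpE⟩ | ⟨⟨hT, _⟩, hpE⟩ | ⟨⟨hT, _⟩, hpE⟩) <;>
        exact ⟨hpE, hT⟩
  rw [hsplit]
  -- disjointness
  have dAB : Disjoint (RA ∩ revProj ⁻¹' E) (RB ∩ revProj ⁻¹' E) := by
    rw [Set.disjoint_left]
    rintro p ⟨⟨⟨_, _, h3⟩, h1⟩, _⟩ ⟨⟨_, h2⟩, _⟩
    have h1' : (1:ℝ)/2 < p.1 := h1
    have h2' : (1:ℝ)/2 < p.2 := h2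
    linarith
  have dAC : Disjoint (RA ∩ revProj ⁻¹' E) (RC ∩ revProj ⁻¹' E) := by
    rw [Set.disjoint_left]
    rintro p ⟨⟨⟨_, hy, _⟩, h1⟩, _⟩ ⟨⟨_, h2⟩, _⟩
    have h1' : (1:ℝ)/2 < p.1 := h1
    have h2' : p.1 + p.2 < 1/2 := h2
    linarith
  have dAD : Disjoint (RA ∩ revProj ⁻¹' E) (RD' ∩ revProj ⁻¹' E) := by
    rw [Set.disjoint_left]
    rintro p ⟨⟨_, h1⟩, _⟩ ⟨⟨_, h2, _, _⟩, _⟩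
    exact h2 h1
  have dBC : Disjoint (RB ∩ revProj ⁻¹' E) (RC ∩ revProj ⁻¹' E) := by
    rw [Set.disjoint_left]
    rintro p ⟨⟨⟨hx, _, _⟩, h1⟩, _⟩ ⟨⟨_, h2⟩, _⟩
    have h1' : (1:ℝ)/2 < p.2 := h1
    have h2' : p.1 + p.2 < 1/2 := h2
    linarith
  have dBD : Disjoint (RB ∩ revProj ⁻¹' E) (RD' ∩ revProj ⁻¹' E) := by
    rw [Set.disjoint_left]
    rintro p ⟨⟨_, h1⟩, _⟩ ⟨⟨_, _, h2, _⟩, _⟩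
    exact h2 h1
  have dCD : Disjoint (RC ∩ revProj ⁻¹' E) (RD' ∩ revProj ⁻¹' E) := by
    rw [Set.disjoint_left]
    rintro p ⟨⟨_, h1⟩, _⟩ ⟨⟨_, _, _, h2⟩, _⟩
    have h1' : p.1 + p.2 < 1/2 := h1
    have h2' : ¬ ((1:ℝ)/2 < 1 - p.1 - p.2) := h2
    rw [not_lt] at h2'
    linarith
  -- split the integral
  rw [lintegral_union (measurableSet_RB.inter hP |>.union
      ((measurableSet_RC.inter hP).union (measurableSet_RD'.inter hP)))
      (dAB.union_right (dAC.union_right dAD)),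
    lintegral_union ((measurableSet_RC.inter hP).union (measurableSet_RD'.inter hP))
      (dBC.union_right dBD),
    lintegral_union (measurableSet_RD'.inter hP) dCD]
  -- replace the boundary region RD' with the open region RD
  have hDD' : ∫⁻ p in RD' ∩ revProj ⁻¹' E, dens p ∂volume
      = ∫⁻ p in RD ∩ revProj ⁻¹' E, dens p ∂volume := by
    apply setLIntegral_congr
    rw [MeasureTheory.ae_eq_set]
    constructor
    · refine measure_mono_null ?_ (measure_union_null (vol_line1 (1/2))
          (measure_union_null (vol_line2 (1/2)) (vol_line3 (1/2))))
      · rintro p ⟨⟨⟨hT, h1, h2, h3⟩, hpre⟩, hnot⟩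
        have h1' : ¬ ((1:ℝ)/2 < p.1) := h1
        have h2' : ¬ ((1:ℝ)/2 < p.2) := h2
        have h3' : ¬ ((1:ℝ)/2 < 1 - p.1 - p.2) := h3
        rw [not_lt] at h1' h2' h3'
        simp only [mem_union, mem_setOf_eq]
        by_contra hcon
        push_neg at hcon
        obtain ⟨e1, e2, e3⟩ := hcon
        exact hnot ⟨⟨hT, lt_of_le_of_ne h1' e1, lt_of_le_of_ne h2' e2,
          lt_of_le_of_ne (by linarith) (Ne.symm e3)⟩, hpre⟩
    · have hsub : RD ∩ revProj ⁻¹' E ⊆ RD' ∩ revProj ⁻¹' E := by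
        rintro p ⟨⟨hT, h1, h2, h3⟩, hpE⟩
        have h1' : p.1 < 1/2 := h1
        have h2' : p.2 < 1/2 := h2
        have h3' : 1/2 < p.1 + p.2 := h3
        exact ⟨⟨hT, by rw [not_lt]; linarith, by rw [not_lt]; linarith,
          by rw [not_lt]; linarith⟩, hpE⟩
      rw [diff_eq_empty.mpr hsub]
      exact measure_empty
  rw [hDD']
  -- change of variables on each region
  have hT1 : ∀ w ∈ simplexT, (2:ℝ) - w.1 ≠ 0 := by
    rintro w ⟨_, hv, huv⟩; intro hcon; linarith
  have hT2 : ∀ w ∈ simplexT, (2:ℝ) - w.2 ≠ 0 := by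
    rintro w ⟨hu, _, huv⟩; intro hcon; linarith
  have hT3 : ∀ w ∈ simplexT, (1:ℝ) + w.1 + w.2 ≠ 0 := by
    rintro w ⟨hu, hv, _⟩; intro hcon; linarith
  rw [cov hA DA RA fwdA bwdA (fun w hw => hasFDerivAt_hA w (hT1 w hw)) E hE,
    cov hB DB RB fwdB bwdB (fun w hw => hasFDerivAt_hB w (hT2 w hw)) E hE,
    cov hC DC RC fwdC bwdC (fun w hw => hasFDerivAt_hC w (hT3 w hw)) E hE,
    cov hD DD RD fwdD bwdD (fun w _ => hasFDerivAt_hD w) E hE]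
  -- combine the four integrals and use the pointwise identity
  rw [← lintegral_add_left measurable_termC, ← lintegral_add_left measurable_termB,
    ← lintegral_add_left measurable_termA]
  apply setLIntegral_congr_fun (hE.inter measurableSet_simplexT)
  intro w hw
  rw [← sum_identity w hw.2]
  ring
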